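/- In a three-dimensional real vector space with a rotation group D, the perpendicularity relation is symmetric: if w ⊥ v then v ⊥ w. -/
import Mathlib


/-- The ray (half-line) spanned by `v`: all nonnegative multiples of `v`. -/
def Ray' {V : Type*} [AddCommGroup V] [Module ℝ V] (v : V) : Set V :=
  {x | ∃ c : ℝ, 0 ≤ c ∧ x = c • v}

/-- The half-plane `ℝ v + ℝ≥0 w`. -/
def HalfPlane {V : Type*} [AddCommGroup V] [Module ℝ V] (v w : V) : Set V :=
  {x | ∃ a b : ℝ, 0 ≤ b ∧ x = a • v + b • w}

/-- `D` is a rotation group: for any two pairs of (half-plane, ray on its boundary)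
there is exactly one element of `D` mapping the first pair to the second. -/
def IsRotationGroup {V : Type*} [AddCommGroup V] [Module ℝ V]
    (D : Subgroup (V ≃ₗ[ℝ] V)) : Prop :=
  ∀ v w v' w' : V, LinearIndependent ℝ ![v, w] → LinearIndependent ℝ ![v', w'] →
    ∃! d : V ≃ₗ[ℝ] V, d ∈ D ∧
      (d : V ≃ₗ[ℝ] V) '' HalfPlane v w = HalfPlane v' w' ∧
      (d : V ≃ₗ[ℝ] V) '' Ray' v = Ray' v'

/-- `w ⊥ v` : some rotation sends `w` to `-w` and fixes `v`. -/
def Perp {V : Type*} [AddCommGroup V] [Module ℝ V]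
    (D : Subgroup (V ≃ₗ[ℝ] V)) (w v : V) : Prop :=
  ∃ r ∈ D, r w = -w ∧ r v = v

section helpers
variable {V : Type*} [AddCommGroup V] [Module ℝ V]

lemma image_ray (d : V ≃ₗ[ℝ] V) (v : V) : ⇑d '' Ray' v = Ray' (d v) := by
  ext x
  constructor
  · rintro ⟨y, ⟨c, hc, rfl⟩, rfl⟩
    exact ⟨c, hc, by simp⟩
  · rintro ⟨c, hc, rfl⟩
    exact ⟨c • v, ⟨c, hc, rfl⟩, by simp⟩

lemma image_halfPlane (d : V ≃ₗ[ℝ] V) (v w : V) :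
    ⇑d '' HalfPlane v w = HalfPlane (d v) (d w) := by
  ext x
  constructor
  · rintro ⟨y, ⟨a, b, hb, rfl⟩, rfl⟩
    exact ⟨a, b, hb, by simp⟩
  · rintro ⟨a, b, hb, rfl⟩
    exact ⟨a • v + b • w, ⟨a, b, hb, rfl⟩, by simp⟩

lemma ray_smul_pos {c : ℝ} (hc : 0 < c) (v : V) : Ray' (c • v) = Ray' v := by
  ext x
  constructor
  · rintro ⟨t, ht, rfl⟩
    exact ⟨t * c, by positivity, by rw [smul_smul]⟩
  · rintro ⟨t, ht, rfl⟩
    exact ⟨t / c, by positivity, by rw [smul_smul, div_mul_cancel₀ _ hc.ne']⟩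

lemma halfplane_smul_left {c : ℝ} (hc : c ≠ 0) (v w : V) :
    HalfPlane (c • v) w = HalfPlane v w := by
  ext x
  constructor
  · rintro ⟨a, b, hb, rfl⟩
    exact ⟨a * c, b, hb, by rw [smul_smul]⟩
  · rintro ⟨a, b, hb, rfl⟩
    exact ⟨a / c, b, hb, by rw [smul_smul, div_mul_cancel₀ _ hc]⟩

lemma halfplane_add_smul (v w : V) (a : ℝ) {b : ℝ} (hb : 0 < b) :
    HalfPlane v (a • v + b • w) = HalfPlane v w := by
  ext x
  constructor
  · rintro ⟨p, q, hq, rfl⟩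
    refine ⟨p + q * a, q * b, by positivity, by module⟩
  · rintro ⟨p, q, hq, rfl⟩
    refine ⟨p - q / b * a, q / b, by positivity, ?_⟩
    match_scalars
    · ring
    · field_simp

lemma ray_eq_extract {x v : V} (hv : v ≠ 0) (h : Ray' x = Ray' v) :
    ∃ c : ℝ, 0 < c ∧ x = c • v := by
  have hx : x ∈ Ray' v := h ▸ ⟨1, zero_le_one, (one_smul ℝ x).symm⟩
  obtain ⟨c, hc, hxc⟩ := hx
  rcases hc.lt_or_eq with h0 | h0
  · exact ⟨c, h0, hxc⟩
  · exfalso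
    have hx0 : x = 0 := by rw [hxc, ← h0, zero_smul]
    have : v ∈ Ray' x := h ▸ ⟨1, zero_le_one, (one_smul ℝ v).symm⟩
    obtain ⟨t, _, htv⟩ := this
    exact hv (by rw [htv, hx0, smul_zero])

lemma halfplane_eq_extract {v w x : V} (h : LinearIndependent ℝ ![v, w])
    (heq : HalfPlane v x = HalfPlane v w) :
    ∃ a b : ℝ, 0 < b ∧ x = a • v + b • w := by
  have hx : x ∈ HalfPlane v w := heq ▸ ⟨0, 1, zero_le_one, by module⟩
  obtain ⟨a, b, hb, hxe⟩ := hx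
  rcases hb.lt_or_eq with h0 | h0
  · exact ⟨a, b, h0, hxe⟩
  · exfalso
    have hx0 : x = a • v := by rw [hxe, ← h0, zero_smul, add_zero]
    have hw : w ∈ HalfPlane v x := heq ▸ ⟨0, 1, zero_le_one, by module⟩
    obtain ⟨p, q, _, hwe⟩ := hw
    have : (p + q * a) • v + (-1 : ℝ) • w = 0 := by
      rw [hx0] at hwe
      rw [hwe]; module
    exact absurd ((LinearIndependent.pair_iff.mp h _ _ this).2) (by norm_num)

lemma li_neg_left {v w : V} (h : LinearIndependent ℝ ![v, w]) :
    LinearIndependent ℝ ![-v, w] := by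
  rw [LinearIndependent.pair_iff] at h ⊢
  intro s t hst
  have := h (-s) t (by rw [← hst]; module)
  exact ⟨neg_eq_zero.mp this.1, this.2⟩

/-- The abstract "half-turn": the unique rotation mapping `(HalfPlane p q, Ray p)` to
`(HalfPlane (-p) q, Ray (-p))` sends `p` to `-p` exactly, and `q` to `a • p + q`;
moreover any element of `D` of this shape equals it. -/
lemma exists_halfturn (D : Subgroup (V ≃ₗ[ℝ] V)) (hD : IsRotationGroup D) {p q : V}
    (hpq : LinearIndependent ℝ ![p, q]) :
    ∃ s : V ≃ₗ[ℝ] V, s ∈ D ∧ s p = -p ∧ (∃ a : ℝ, s q = a • p + q) ∧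
      ∀ t : V ≃ₗ[ℝ] V, t ∈ D → t p = -p → (∃ b : ℝ, t q = b • p + q) → t = s := by
  have hp0 : p ≠ 0 := by simpa using hpq.ne_zero 0
  have hnpq : LinearIndependent ℝ ![-p, q] := li_neg_left hpq
  obtain ⟨s, ⟨hsD, hs1, hs2⟩, hsu⟩ := hD p q (-p) q hpq hnpq
  rw [image_halfPlane] at hs1
  rw [image_ray] at hs2
  obtain ⟨c, hc, hsp⟩ := ray_eq_extract (neg_ne_zero.mpr hp0) hs2
  rw [hsp, halfplane_smul_left hc.ne'] at hs1
  obtain ⟨a', b, hb, hsq⟩ := halfplane_eq_extract hnpq hs1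
  -- `s * s` satisfies the defining property of the identity
  have hssp : (s * s) p = (c * c) • p := by
    show s (s p) = _
    rw [hsp, map_smul, map_neg, hsp]
    module
  have hssq : (s * s) q = (a' * c - a' * b) • p + (b * b) • q := by
    show s (s q) = _
    rw [hsq, map_add, map_smul, map_smul, map_neg, hsp, hsq]
    module
  obtain ⟨e, -, heu⟩ := hD p q p q hpq hpq
  have hcc : (0:ℝ) < c * c := by positivity
  have hss1 : s * s = 1 := by
    have h1 := heu (s * s) ⟨mul_mem hsD hsD, by
      rw [image_halfPlane, hssp, hssq, halfplane_smul_left hcc.ne',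
        halfplane_add_smul p q _ (by positivity : (0:ℝ) < b * b)], by
      rw [image_ray, hssp, ray_smul_pos hcc]⟩
    have h2 := heu 1 ⟨one_mem D, by
      rw [image_halfPlane]; rfl, by rw [image_ray]; rfl⟩
    rw [h1, h2]
  have hc1 : c = 1 := by
    have hpp : (c * c) • p = p := by rw [← hssp, hss1]; rfl
    have : (c * c - 1) • p = 0 := by rw [sub_smul, hpp, one_smul, sub_self]
    have hcc1 : c * c = 1 := by
      rcases smul_eq_zero.mp this with h | h
      · linarith [sub_eq_zero.mp (by linarith [h] : c * c - 1 = 0)]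
      · exact absurd h hp0
    nlinarith
  have hb1 : b = 1 := by
    have hqq : (a' * c - a' * b) • p + (b * b) • q = q := by rw [← hssq, hss1]; rfl
    have h0 : (a' * c - a' * b) • p + (b * b - 1) • q = 0 := by
      rw [← sub_eq_zero] at hqq
      rw [← hqq]; module
    have := (LinearIndependent.pair_iff.mp hpq _ _ h0).2
    nlinarith
  refine ⟨s, hsD, by rw [hsp, hc1, one_smul], ⟨-a', by rw [hsq, hb1]; module⟩, ?_⟩
  intro t htD htp ⟨b', htq⟩
  refine hsu t ⟨htD, ?_, ?_⟩
  · rw [image_halfPlane, htp, htq]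
    have : b' • p + q = (-b') • (-p) + (1:ℝ) • q := by module
    rw [this, halfplane_add_smul (-p) q (-b') one_pos]
  · rw [image_ray, htp]

end helpers

theorem stmt3 {V : Type*} [AddCommGroup V] [Module ℝ V]
    (hdim : Module.finrank ℝ V = 3)
    (D : Subgroup (V ≃ₗ[ℝ] V)) (hD : IsRotationGroup D)
    (v w : V) (h : Perp D w v) : Perp D v w := by
  obtain ⟨r, hrD, hrw, hrv⟩ := h
  by_cases hv : v = 0
  · exact ⟨1, one_mem D, by rw [hv]; simp, rfl⟩
  by_cases hw : w = 0
  · -- find some u independent from v, and half-turn about an axis flipping v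
    have hne : Submodule.span ℝ {v} ≠ ⊤ := by
      intro htop
      have h1 : Module.finrank ℝ (Submodule.span ℝ {v}) = 1 := finrank_span_singleton hv
      rw [htop, finrank_top, hdim] at h1
      norm_num at h1
    have hex : ∃ u, u ∉ Submodule.span ℝ {v} := by
      by_contra h'
      push_neg at h'
      exact hne (eq_top_iff.mpr fun x _ => h' x)
    obtain ⟨u, hu⟩ := hex
    have hli : LinearIndependent ℝ ![v, u] := by
      rw [LinearIndependent.pair_iff]
      intro s t hst
      by_cases ht : t = 0
      · rw [ht, zero_smul, add_zero] at hst
        exact ⟨(smul_eq_zero.mp hst).resolve_right hv, ht⟩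
      · exfalso
        apply hu
        rw [Submodule.mem_span_singleton]
        refine ⟨-s / t, ?_⟩
        have : u = t⁻¹ • (t • u) := by rw [smul_smul, inv_mul_cancel₀ ht, one_smul]
        rw [this]
        have htu : t • u = (-s) • v := by
          rw [← sub_eq_zero, ← hst]
          module
        rw [htu, smul_smul]
        rw [div_eq_inv_mul]
    obtain ⟨s, hsD, hsp, -, -⟩ := exists_halfturn D hD hli
    exact ⟨s, hsD, hsp, by rw [hw, map_zero]⟩
  · -- main case: v, w are linearly independent
    have hli : LinearIndependent ℝ ![v, w] := by
      rw [LinearIndependent.pair_iff]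
      intro s t hst
      have h2 : s • v + t • (-w) = 0 := by
        rw [← hrv, ← hrw, ← map_smul, ← map_smul, ← map_add, hst, map_zero]
      have h3 : (s + s) • v = 0 := by
        have heq : (s + s) • v = (s • v + t • w) + (s • v + t • (-w)) := by module
        rw [heq, hst, h2, add_zero]
      have hs0 : s = 0 := by
        have := (smul_eq_zero.mp h3).resolve_right hv
        linarith
      refine ⟨hs0, ?_⟩
      rw [hs0, zero_smul, zero_add] at hst
      exact (smul_eq_zero.mp hst).resolve_right hw
    obtain ⟨s, hsD, hsp, ⟨a, hsq⟩, huniq⟩ := exists_halfturn D hD hli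
    -- the conjugate r * s * r has the same defining property, hence equals s; so a = 0
    have htp : (r * s * r) v = -v := by
      show r (s (r v)) = -v
      rw [hrv, hsp, map_neg, hrv]
    have htq : (r * s * r) w = (-a) • v + w := by
      show r (s (r w)) = _
      rw [hrw, map_neg, hsq, map_neg, map_add, map_smul, hrv, hrw]
      module
    have hts : r * s * r = s :=
      huniq _ (mul_mem (mul_mem hrD hsD) hrD) htp ⟨-a, htq⟩
    have ha : a = 0 := by
      have heq : (-a) • v + w = a • v + w := by rw [← htq, hts, hsq]
      have h0 : (a + a) • v = 0 := by
        rw [← sub_eq_zero] at heq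
        rw [← neg_zero, ← heq]
        module
      have := (smul_eq_zero.mp h0).resolve_right hv
      linarith
    exact ⟨s, hsD, hsp, by rw [hsq, ha, zero_smul, zero_add]⟩
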